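/- Let n ≥ 3, p ∈ {0,1}^n, and i ≠ j in [n]. Let B^L_{ij} = {b ∈ {0,1}^n : b_i ≥ p_i, b_j = b_i - p_i + p_j, and b_k ≤ b_i - p_i + p_k for all k ∉ {i,j}}, with each b weighted by ρ(b) = (-1)^{#odd entries of b}. If |B^L_{ij}| > 1, then ∑_{b ∈ B^L_{ij}} ρ(b) ∈ {0, 1}. -/

import Mathlib

open Finset

/-- `ρ(ε)`: +1 if `ε` has an even number of 1-entries, -1 otherwise. -/
def rho {n : ℕ} (ε : Fin n → Bool) : ℤ :=
  (-1) ^ (Finset.univ.filter (fun k => ε k = true)).card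

/-- The value in `{0,1} ⊆ ℤ` of a Boolean vector coordinate. -/
def val {n : ℕ} (ε : Fin n → Bool) : Fin n → ℤ := fun k => if ε k then 1 else 0

/-- `B^L_{ij}`: the lower-cube gadget bids indifferent between goods `i` and `j` at `p`. -/
def BL {n : ℕ} (p : Fin n → ℤ) (i j : Fin n) : Finset (Fin n → Bool) :=
  Finset.univ.filter (fun ε =>
    p i ≤ val ε i ∧ val ε j = val ε i - p i + p j ∧
      ∀ k, k ≠ i → k ≠ j → val ε k ≤ val ε i - p i + p k)

lemma val_nonneg {n : ℕ} (ε : Fin n → Bool) (k : Fin n) : 0 ≤ val ε k := by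
  unfold _root_.val; split <;> norm_num

lemma val_le_one {n : ℕ} (ε : Fin n → Bool) (k : Fin n) : val ε k ≤ 1 := by
  unfold _root_.val; split <;> norm_num

lemma val_update_ne {n : ℕ} (ε : Fin n → Bool) (k0 k : Fin n) (b : Bool) (h : k ≠ k0) :
    val (Function.update ε k0 b) k = val ε k := by
  simp [_root_.val, Function.update_of_ne h]

lemma rho_flip {n : ℕ} (ε : Fin n → Bool) (k0 : Fin n) :
    rho (Function.update ε k0 (!ε k0)) = - rho ε := by
  unfold rho
  rcases h : ε k0 with _ | _
  · have : (Finset.univ.filter (fun k => Function.update ε k0 (!ε k0) k = true))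
        = insert k0 (Finset.univ.filter (fun k => ε k = true)) := by
      ext k
      by_cases hk : k = k0 <;>
        simp [hk, Function.update_of_ne, h, Function.update_self]
    simp only [h] at this ⊢
    rw [this, Finset.card_insert_of_notMem (by simp [h])]
    ring
  · have : (Finset.univ.filter (fun k => Function.update ε k0 (!ε k0) k = true))
        = (Finset.univ.filter (fun k => ε k = true)).erase k0 := by
      ext k
      by_cases hk : k = k0 <;>
        simp [hk, Function.update_of_ne, h, Function.update_self]
    simp only [h] at this ⊢
    rw [this, Finset.card_erase_of_mem (by simp [h])]
    have hpos : 0 < (Finset.univ.filter (fun k => ε k = true)).card :=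
      Finset.card_pos.2 ⟨k0, by simp [h]⟩
    rw [← Nat.succ_pred_eq_of_pos hpos]
    simp [Nat.succ_sub_one, pow_succ]

lemma flip_invol {n : ℕ} (ε : Fin n → Bool) (k0 : Fin n) :
    Function.update (Function.update ε k0 (!ε k0)) k0
      (!(Function.update ε k0 (!ε k0)) k0) = ε := by
  funext k
  by_cases hk : k = k0
  · subst hk; simp
  · simp [Function.update_of_ne hk]

lemma sum_rho_zero {n : ℕ} (s : Finset (Fin n → Bool)) (k0 : Fin n)
    (h : ∀ ε ∈ s, Function.update ε k0 (!ε k0) ∈ s) :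
    ∑ ε ∈ s, rho ε = 0 := by
  refine Finset.sum_involution (fun ε _ => Function.update ε k0 (!ε k0)) ?_ ?_
    (fun ε hε => h ε hε) ?_
  · intro ε _; rw [rho_flip]; ring
  · intro ε _ _
    intro hc
    have := congrFun hc k0
    simp at this
  · intro ε hε; exact flip_invol ε k0



lemma val_eq_one_iff {n : ℕ} (ε : Fin n → Bool) (k : Fin n) : val ε k = 1 ↔ ε k = true := by
  unfold _root_.val; cases h : ε k <;> simp

lemma val_eq_zero_iff {n : ℕ} (ε : Fin n → Bool) (k : Fin n) : val ε k = 0 ↔ ε k = false := by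
  unfold _root_.val; cases h : ε k <;> simp

lemma mem_BL {n : ℕ} {p : Fin n → ℤ} {i j : Fin n} {ε : Fin n → Bool} :
    ε ∈ BL p i j ↔ (p i ≤ val ε i ∧ val ε j = val ε i - p i + p j ∧
      ∀ k, k ≠ i → k ≠ j → val ε k ≤ val ε i - p i + p k) := by
  simp [BL]

lemma flip_mem {n : ℕ} {p : Fin n → ℤ} {i j k0 : Fin n} (hk0i : k0 ≠ i) (hk0j : k0 ≠ j)
    {ε : Fin n → Bool} (hε : ε ∈ BL p i j) (hfree : 1 ≤ val ε i - p i + p k0) :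
    Function.update ε k0 (!ε k0) ∈ BL p i j := by
  rw [mem_BL] at hε ⊢
  obtain ⟨h1, h2, h3⟩ := hε
  rw [val_update_ne _ _ _ _ (Ne.symm hk0i), val_update_ne _ _ _ _ (Ne.symm hk0j)]
  refine ⟨h1, h2, fun k hki hkj => ?_⟩
  by_cases hk : k = k0
  · subst hk
    exact le_trans (val_le_one _ _) hfree
  · rw [val_update_ne _ _ _ _ hk]
    exact h3 k hki hkj


theorem stmt_10 (n : ℕ) (hn : 3 ≤ n) (p : Fin n → ℤ) (hp : ∀ k, p k = 0 ∨ p k = 1)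
    (i j : Fin n) (hij : i ≠ j) (hcard : 1 < (BL p i j).card) :
    ∑ ε ∈ BL p i j, rho ε ∈ ({0, 1} : Set ℤ) := by
  have hex : ∃ k0 : Fin n, k0 ≠ i ∧ k0 ≠ j := by
    by_contra h
    push_neg at h
    have hsub : (Finset.univ : Finset (Fin n)) ⊆ {i, j} := by
      intro k _
      rcases eq_or_ne k i with hk | hk
      · simp [hk]
      · simp [h k hk]
    have := Finset.card_le_card hsub
    simp [Finset.card_univ] at this
    have h2 : ({i, j} : Finset (Fin n)).card ≤ 2 :=
      le_trans (Finset.card_insert_le _ _) (by simp)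
    omega
  by_cases hcase : ¬ (p i = 1 ∨ p j = 1)
  · -- p i = 0 and p j = 0
    push_neg at hcase
    have hpi : p i = 0 := by rcases hp i with h | h <;> [exact h; exact absurd h hcase.1]
    have hpj : p j = 0 := by rcases hp j with h | h <;> [exact h; exact absurd h hcase.2]
    rw [← Finset.sum_filter_add_sum_filter_not (BL p i j) (fun ε => ε i = true)]
    obtain ⟨k0, hk0i, hk0j⟩ := hex
    have hsum1 : ∑ ε ∈ (BL p i j).filter (fun ε => ε i = true), rho ε = 0 := by
      apply sum_rho_zero _ k0
      intro ε hε
      rw [Finset.mem_filter] at hε ⊢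
      obtain ⟨hε1, hε2⟩ := hε
      refine ⟨flip_mem hk0i hk0j hε1 ?_, ?_⟩
      · rw [(val_eq_one_iff ε i).2 hε2, hpi]
        rcases hp k0 with h | h <;> rw [h] <;> norm_num
      · rw [Function.update_of_ne (Ne.symm hk0i)]
        exact hε2
    rw [hsum1, zero_add]
    by_cases hone : ∃ k1 : Fin n, k1 ≠ i ∧ k1 ≠ j ∧ p k1 = 1
    · obtain ⟨k1, hk1i, hk1j, hk1⟩ := hone
      have hsum2 : ∑ ε ∈ (BL p i j).filter (fun ε => ¬ ε i = true), rho ε = 0 := by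
        apply sum_rho_zero _ k1
        intro ε hε
        rw [Finset.mem_filter] at hε ⊢
        obtain ⟨hε1, hε2⟩ := hε
        simp only [Bool.not_eq_true] at hε2
        refine ⟨flip_mem hk1i hk1j hε1 ?_, ?_⟩
        · rw [hpi, hk1]
          have := val_nonneg ε i
          clear hsum1; omega
        · rw [Function.update_of_ne (Ne.symm hk1i)]
          simp [hε2]
      rw [hsum2]; left; rfl
    · push_neg at hone
      have hset : (BL p i j).filter (fun ε => ¬ ε i = true)
          = {fun _ => false} := by
        apply Finset.eq_singleton_iff_unique_mem.2
        constructor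
        · rw [Finset.mem_filter, mem_BL]
          refine ⟨⟨?_, ?_, ?_⟩, by simp⟩
          · simp [_root_.val, hpi]
          · simp [_root_.val, hpi, hpj]
          · intro k hki hkj
            rcases hp k with h | h <;> simp [_root_.val, h, hpi]
        · intro ε hε
          rw [Finset.mem_filter, mem_BL] at hε
          obtain ⟨⟨h1, h2, h3⟩, h4⟩ := hε
          simp only [Bool.not_eq_true] at h4
          have hvi : val ε i = 0 := (val_eq_zero_iff ε i).2 h4
          funext k
          by_cases hki : k = i
          · simp [hki, h4]
          · by_cases hkj : k = j
            · subst hkj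
              have : val ε k = 0 := by rw [h2, hvi, hpi, hpj]; ring
              simpa using (val_eq_zero_iff ε k).1 this
            · have := h3 k hki hkj
              have hvk : val ε k = 0 := by
                have h5 := val_nonneg ε k
                have hpk := hone k hki hkj
                rcases hp k with hq | hq
                · rw [hq, hvi, hpi] at this; clear hsum1; omega
                · exact absurd hq hpk
              simpa using (val_eq_zero_iff ε k).1 hvk
      rw [hset]
      right
      simp [rho, Set.mem_singleton_iff]
  · -- p i = 1 or p j = 1: rigid case
    rw [not_not] at hcase
    have rigid : ∀ ε ∈ BL p i j, val ε i = p i ∧ val ε j = p j ∧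
        ∀ k, k ≠ i → k ≠ j → val ε k ≤ p k := by
      intro ε hε
      rw [mem_BL] at hε
      obtain ⟨h1, h2, h3⟩ := hε
      have hvi := val_le_one ε i
      have hvi' := val_nonneg ε i
      have hvj := val_le_one ε j
      have hvj' := val_nonneg ε j
      rcases hp i with hpi | hpi <;> rcases hp j with hpj | hpj
      · exfalso; rcases hcase with h | h <;> omega
      · have hei : val ε i = 0 := by omega
        refine ⟨by omega, by omega, fun k hki hkj => ?_⟩
        have := h3 k hki hkj; omega
      · refine ⟨by omega, by omega, fun k hki hkj => ?_⟩
        have := h3 k hki hkj; omega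
      · refine ⟨by omega, by omega, fun k hki hkj => ?_⟩
        have := h3 k hki hkj; omega
    by_cases hone : ∃ k1 : Fin n, k1 ≠ i ∧ k1 ≠ j ∧ p k1 = 1
    · obtain ⟨k1, hk1i, hk1j, hk1⟩ := hone
      have : ∑ ε ∈ BL p i j, rho ε = 0 := by
        apply sum_rho_zero _ k1
        intro ε hε
        apply flip_mem hk1i hk1j hε
        rw [(rigid ε hε).1, hk1]
        omega
      rw [this]; left; rfl
    · exfalso
      push_neg at hone
      have : (BL p i j).card ≤ 1 := by
        apply Finset.card_le_one.2
        intro ε hε η hη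
        obtain ⟨he1, he2, he3⟩ := rigid ε hε
        obtain ⟨hh1, hh2, hh3⟩ := rigid η hη
        funext k
        have veq : val ε k = val η k := by
          by_cases hki : k = i
          · subst hki; omega
          · by_cases hkj : k = j
            · subst hkj; omega
            · have hpk := hone k hki hkj
              have h1 := he3 k hki hkj
              have h2 := hh3 k hki hkj
              have h5 := val_nonneg ε k
              have h6 := val_nonneg η k
              rcases hp k with hq | hq
              · omega
              · exact absurd hq hpk
        cases hek : ε k <;> cases hhk : η k <;>
          simp [_root_.val, hek, hhk] at veq ⊢
      omega
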